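/- arXiv:0808.2692 — 2 statements merged into one kernel-verified Lean document; each statement's English description precedes it below -/
import Mathlib

section
/- ∫₀^1 x^{-ln x}/(1+x²) dx = ∫₀^∞ e^{-4x²/π}/cosh(2√π x) dx. -/
open Real MeasureTheory Set

noncomputable section

lemma rus_gauss (c : ℝ) :
    ∫ s : ℝ, Real.exp (-s^2) * Real.cos (2*s*c) = Real.sqrt π * Real.exp (-c^2) := by
  have h := fourierIntegral_gaussian (b := (1:ℂ)) (by norm_num) (2*c : ℂ)
  have hint : Integrable (fun x : ℝ => Complex.exp (Complex.I * (2*c) * x) * Complex.exp (-1 * x^2)) := by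
    have h2 := integrable_cexp_quadratic (b := (1:ℂ)) (by norm_num) (Complex.I * (2*c)) 0
    refine h2.congr (Filter.Eventually.of_forall fun x => ?_)
    simp only [← Complex.exp_add]; ring_nf
  have hre := _root_.integral_re hint
  rw [h] at hre
  have h1 : ((π : ℂ) / 1) ^ (1/2 : ℂ) * Complex.exp (-(2*c:ℂ)^2 / (4*1)) =
      ((Real.sqrt π * Real.exp (-c^2) : ℝ) : ℂ) := by
    rw [div_one]
    rw [show ((1:ℂ)/2) = ((1/2 : ℝ) : ℂ) by norm_num,
      ← Complex.ofReal_cpow Real.pi_nonneg]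
    rw [show (-(2*c:ℂ)^2/(4*1)) = ((-c^2 : ℝ) : ℂ) by push_cast; ring]
    rw [← Complex.ofReal_exp, ← Complex.ofReal_mul, ← Real.sqrt_eq_rpow]
  rw [h1] at hre
  simp only [RCLike.re_to_complex, Complex.ofReal_re] at hre
  rw [← hre]
  congr 1; ext x
  have e1 : Complex.I * (2*(c:ℂ)) * x = ((2*x*c : ℝ):ℂ) * Complex.I := by push_cast; ring
  have e2 : ((-1 : ℂ) * x^2) = ((-x^2 : ℝ) : ℂ) := by push_cast; ring
  rw [e1, e2, ← Complex.ofReal_exp,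
    mul_comm (Complex.exp ((2*x*c:ℝ) * Complex.I)) ((rexp (-x^2) : ℝ) : ℂ),
    Complex.re_ofReal_mul, Complex.exp_ofReal_mul_I_re]


lemma rus_beta (b : ℝ) :
    Complex.betaIntegral ((1 + b*Complex.I)/2) ((1 - b*Complex.I)/2)
      = π / Complex.cosh ((π*b/2 : ℝ)) := by
  set u : ℂ := (1 + b*Complex.I)/2 with hu_def
  have hu : 0 < u.re := by
    simp [hu_def, Complex.div_re, Complex.add_re]
  have hv : 0 < ((1 - (b:ℝ)*Complex.I)/2 : ℂ).re := by
    simp [Complex.div_re, Complex.sub_re]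
  have h := Complex.Gamma_mul_Gamma_eq_betaIntegral hu hv
  have hsum : u + (1 - (b:ℝ)*Complex.I)/2 = 1 := by rw [hu_def]; ring
  rw [hsum, Complex.Gamma_one, one_mul] at h
  have h2 := Complex.Gamma_mul_Gamma_one_sub u
  have hone : (1:ℂ) - u = (1 - (b:ℝ)*Complex.I)/2 := by rw [hu_def]; ring
  rw [hone] at h2
  rw [← h, h2]
  congr 1
  have harg : (π:ℂ) * u = ((π*b/2 : ℝ):ℂ)*Complex.I + (π:ℂ)/2 := by
    rw [hu_def]; push_cast; ring
  rw [harg, Complex.sin_add_pi_div_two, Complex.cos_mul_I]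

lemma rus_mellinC (b : ℝ) :
    ∫ x in Ioi (0:ℝ), Complex.exp ((b * Real.log x : ℝ) * Complex.I) / (1 + (x:ℂ)^2)
      = ((π / (2 * Real.cosh (π*b/2)) : ℝ) : ℂ) := by
  set u : ℂ := (1 + b*Complex.I)/2 with hu_def
  -- step 1 : x = sqrt t
  have himg1 : Real.sqrt '' (Ioi 0) = Ioi (0:ℝ) := by
    ext y; constructor
    · rintro ⟨x, hx, rfl⟩; exact Real.sqrt_pos.mpr hx
    · intro hy; exact ⟨y^2, mem_Ioi.mpr (pow_pos (mem_Ioi.mp hy) 2), Real.sqrt_sq hy.le⟩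
  have hder1 : ∀ t ∈ Ioi (0:ℝ), HasDerivWithinAt Real.sqrt (1/(2*Real.sqrt t)) (Ioi 0) t :=
    fun t ht => (Real.hasDerivAt_sqrt (ne_of_gt ht)).hasDerivWithinAt
  have hinj1 : InjOn Real.sqrt (Ioi 0) := fun a ha c hc h => by
    rwa [Real.sqrt_inj (le_of_lt ha) (le_of_lt hc)] at h
  have step1 : (∫ x in Ioi (0:ℝ), Complex.exp ((b * Real.log x : ℝ) * Complex.I) / (1 + (x:ℂ)^2))
      = ∫ t in Ioi (0:ℝ), |1/(2*Real.sqrt t)| •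
          (Complex.exp ((b * Real.log (Real.sqrt t) : ℝ) * Complex.I) / (1 + ((Real.sqrt t : ℝ):ℂ)^2)) := by
    have h := integral_image_eq_integral_abs_deriv_smul measurableSet_Ioi hder1 hinj1
      (fun x : ℝ => Complex.exp ((b * Real.log x : ℝ) * Complex.I) / (1 + (x:ℂ)^2))
    rw [himg1] at h
    exact h
  -- step 2 : t = v / (1 - v)
  set φ : ℝ → ℝ := fun v => v/(1-v) with hφ_def
  have himg2 : φ '' (Ioo 0 1) = Ioi (0:ℝ) := by
    ext y; constructor
    · rintro ⟨v, ⟨hv0, hv1⟩, rfl⟩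
      exact div_pos hv0 (by linarith)
    · intro hy
      have hy' : (0:ℝ) < y := hy
      have h1y : (0:ℝ) < 1 + y := by linarith
      refine ⟨y/(1+y), ⟨div_pos hy h1y, by rw [div_lt_one h1y]; linarith⟩, ?_⟩
      simp only [hφ_def]
      rw [eq_comm, eq_div_iff]
      · field_simp; ring
      · intro hc
        have : (1:ℝ) - y/(1+y) = 1/(1+y) := by field_simp; ring
        rw [this] at hc
        exact (one_div_ne_zero h1y.ne') hc
  have hder2 : ∀ v ∈ Ioo (0:ℝ) 1, HasDerivWithinAt φ (((1-v)^2)⁻¹) (Ioo 0 1) v := by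
    intro v hv
    have h1v : (0:ℝ) < 1 - v := by linarith [hv.2]
    have h' : HasDerivAt (fun v : ℝ => v/(1-v)) ((1*(1-v) - v*(0-1))/((1-v)^2)) v :=
      (hasDerivAt_id v).div ((hasDerivAt_const v 1).sub (hasDerivAt_id v)) h1v.ne'
    have : HasDerivAt φ (((1-v)^2)⁻¹) v := by
      convert h' using 1
      field_simp
      ring
    exact this.hasDerivWithinAt
  have hinj2 : InjOn φ (Ioo 0 1) := by
    intro a ha c hc h
    have h1a : (0:ℝ) < 1 - a := by linarith [ha.2]
    have h1c : (0:ℝ) < 1 - c := by linarith [hc.2]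
    simp only [hφ_def] at h
    rw [div_eq_div_iff h1a.ne' h1c.ne'] at h
    nlinarith
  have step2 : (∫ t in Ioi (0:ℝ), |1/(2*Real.sqrt t)| •
          (Complex.exp ((b * Real.log (Real.sqrt t) : ℝ) * Complex.I) / (1 + ((Real.sqrt t : ℝ):ℂ)^2)))
      = ∫ v in Ioo (0:ℝ) 1, |((1-v)^2)⁻¹| • (|1/(2*Real.sqrt (φ v))| •
          (Complex.exp ((b * Real.log (Real.sqrt (φ v)) : ℝ) * Complex.I) / (1 + ((Real.sqrt (φ v) : ℝ):ℂ)^2))) := by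
    have h := integral_image_eq_integral_abs_deriv_smul measurableSet_Ioo hder2 hinj2
      (fun t : ℝ => |1/(2*Real.sqrt t)| •
          (Complex.exp ((b * Real.log (Real.sqrt t) : ℝ) * Complex.I) / (1 + ((Real.sqrt t : ℝ):ℂ)^2)))
    rw [himg2] at h
    exact h
  have hpt : ∀ v ∈ Ioo (0:ℝ) 1, |((1-v)^2)⁻¹| • (|1/(2*Real.sqrt (φ v))| •
          (Complex.exp ((b * Real.log (Real.sqrt (φ v)) : ℝ) * Complex.I) / (1 + ((Real.sqrt (φ v) : ℝ):ℂ)^2)))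
      = (1/2 : ℝ) • ((v:ℂ)^(u-1) * ((1:ℂ)-(v:ℂ))^((1 - b*Complex.I)/2 - 1)) := by
    intro v hv
    obtain ⟨hv0, hv1⟩ := hv
    have h1v : (0:ℝ) < 1 - v := by linarith
    have hφv : 0 < φ v := div_pos hv0 h1v
    have hsv : 0 < Real.sqrt v := Real.sqrt_pos.mpr hv0
    have hs1v : 0 < Real.sqrt (1-v) := Real.sqrt_pos.mpr h1v
    have hsq1v : Real.sqrt (1-v)^2 = 1-v := Real.sq_sqrt h1v.le
    set θ : ℝ := b/2 * (Real.log v - Real.log (1-v)) with hθ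
    set ρ : ℝ := -(Real.log v + Real.log (1-v))/2 with hρ
    have hlogφ : Real.log (φ v) = Real.log v - Real.log (1-v) := by
      simp only [hφ_def]
      exact Real.log_div hv0.ne' h1v.ne'
    have hargθ : b * Real.log (Real.sqrt (φ v)) = θ := by
      rw [Real.log_sqrt hφv.le, hlogφ, hθ]; ring
    have hsq : ((Real.sqrt (φ v) : ℝ):ℂ)^2 = ((φ v : ℝ) : ℂ) := by
      rw [← Complex.ofReal_pow, Real.sq_sqrt hφv.le]
    have hden : (1:ℂ) + ((φ v : ℝ) : ℂ) = ((((1-v)⁻¹ : ℝ)) : ℂ) := by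
      have : ((1-v)⁻¹ : ℝ) = 1 + φ v := by
        simp only [hφ_def]; field_simp; ring
      rw [this]; push_cast; ring
    -- left side as coefficient * exp(θ I)
    have hL : |((1-v)^2)⁻¹| • (|1/(2*Real.sqrt (φ v))| •
          (Complex.exp ((b * Real.log (Real.sqrt (φ v)) : ℝ) * Complex.I) / (1 + ((Real.sqrt (φ v) : ℝ):ℂ)^2)))
        = ((|((1-v)^2)⁻¹| * (1/(2*Real.sqrt (φ v))) * (1-v) : ℝ) : ℂ) * Complex.exp ((θ:ℝ) * Complex.I) := by
      rw [hargθ, hsq, hden, abs_of_pos (by positivity : (0:ℝ) < 1/(2*Real.sqrt (φ v)))]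
      simp only [Complex.real_smul, div_eq_mul_inv, ← Complex.ofReal_inv, inv_inv]
      push_cast
      ring
    -- right side as coefficient * exp(θ I)
    have hcv : (v:ℂ) ≠ 0 := by exact_mod_cast hv0.ne'
    have h1vC : ((1:ℂ)-(v:ℂ)) = ((1-v : ℝ):ℂ) := by push_cast; ring
    have hpow1 : (v:ℂ)^(u-1) = Complex.exp (Complex.log (v:ℂ) * (u-1)) :=
      Complex.cpow_def_of_ne_zero hcv _
    have hpow2 : ((1:ℂ)-(v:ℂ))^((1 - b*Complex.I)/2 - 1)
        = Complex.exp (Complex.log ((1-v:ℝ):ℂ) * ((1 - b*Complex.I)/2 - 1)) := by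
      rw [h1vC, Complex.cpow_def_of_ne_zero (by exact_mod_cast h1v.ne')]
    have hsum : Complex.log (v:ℂ) * (u-1) + Complex.log ((1-v:ℝ):ℂ) * ((1 - b*Complex.I)/2 - 1)
        = ((ρ:ℝ):ℂ) + ((θ:ℝ):ℂ)*Complex.I := by
      rw [← Complex.ofReal_log hv0.le, ← Complex.ofReal_log h1v.le, hu_def, hθ, hρ]
      push_cast
      ring
    have hR : (1/2 : ℝ) • ((v:ℂ)^(u-1) * ((1:ℂ)-(v:ℂ))^((1 - b*Complex.I)/2 - 1))
        = ((1/2 * Real.exp ρ : ℝ) : ℂ) * Complex.exp ((θ:ℝ) * Complex.I) := by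
      rw [hpow1, hpow2, ← Complex.exp_add, hsum, Complex.exp_add, ← Complex.ofReal_exp]
      simp only [Complex.real_smul]
      push_cast
      ring
    rw [hL, hR]
    congr 2
    -- real coefficient identity
    have hs1 : Real.sqrt (φ v) = Real.sqrt v / Real.sqrt (1-v) := by
      simp only [hφ_def]
      exact Real.sqrt_div hv0.le _
    have he1 : Real.exp (Real.log v / 2) = Real.sqrt v := by
      rw [← Real.log_sqrt hv0.le, Real.exp_log hsv]
    have he2 : Real.exp (Real.log (1-v) / 2) = Real.sqrt (1-v) := by
      rw [← Real.log_sqrt h1v.le, Real.exp_log hs1v]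
    have he : Real.exp ρ = (Real.sqrt v)⁻¹ * (Real.sqrt (1-v))⁻¹ := by
      rw [hρ, show -(Real.log v + Real.log (1-v))/2
          = (-(Real.log v/2)) + (-(Real.log (1-v)/2)) by ring,
        Real.exp_add, Real.exp_neg, Real.exp_neg, he1, he2]
    rw [he, hs1, abs_of_pos (by positivity : (0:ℝ) < ((1-v)^2)⁻¹)]
    have key : Real.sqrt (1-v) * Real.sqrt (1-v) = 1-v := Real.mul_self_sqrt h1v.le
    field_simp
    linear_combination key
  rw [step1, step2, setIntegral_congr_fun measurableSet_Ioo hpt, integral_smul]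
  have hbeta : (∫ v in Ioo (0:ℝ) 1, ((v:ℂ)^(u-1) * ((1:ℂ)-(v:ℂ))^((1 - b*Complex.I)/2 - 1)))
      = Complex.betaIntegral u ((1 - b*Complex.I)/2) := by
    rw [Complex.betaIntegral, intervalIntegral.integral_of_le zero_le_one,
      integral_Ioc_eq_integral_Ioo]
  rw [hbeta, hu_def, rus_beta, ← Complex.ofReal_cosh]
  simp only [Complex.real_smul]
  have hch : Real.cosh (π*b/2) ≠ 0 := (Real.cosh_pos (π*b/2)).ne'
  push_cast
  field_simp

lemma rus_mellinR (b : ℝ) :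
    ∫ x in Ioi (0:ℝ), Real.cos (b * Real.log x) / (1 + x^2)
      = π / (2 * Real.cosh (π*b/2)) := by
  have hmeas : Measurable (fun x : ℝ => Complex.exp ((b * Real.log x : ℝ) * Complex.I) / (1 + (x:ℂ)^2)) := by
    have hm1 : Measurable (fun x : ℝ => Complex.exp ((b * Real.log x : ℝ) * Complex.I)) :=
      Complex.measurable_exp.comp
        ((Complex.measurable_ofReal.comp (measurable_const.mul Real.measurable_log)).mul_const Complex.I)
    exact hm1.div (measurable_const.add ((Complex.measurable_ofReal.comp measurable_id).pow_const 2))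
  have hint : IntegrableOn (fun x : ℝ => Complex.exp ((b * Real.log x : ℝ) * Complex.I) / (1 + (x:ℂ)^2)) (Ioi 0) := by
    refine Integrable.mono' ((integrable_inv_one_add_sq).restrict (s := Ioi 0))
      hmeas.aestronglyMeasurable ?_
    filter_upwards with x
    have h1 : (1:ℂ) + (x:ℂ)^2 = ((1+x^2 : ℝ):ℂ) := by push_cast; ring
    rw [norm_div, h1, Complex.norm_real, Real.norm_eq_abs,
      abs_of_pos (by positivity : (0:ℝ) < 1+x^2), Complex.norm_exp]
    simp
  have h := integral_re hint
  rw [rus_mellinC] at h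
  simp only [RCLike.re_to_complex, Complex.ofReal_re] at h
  rw [← h]
  refine setIntegral_congr_fun measurableSet_Ioi (fun x _ => ?_)
  have h1 : (1:ℂ) + (x:ℂ)^2 = ((1+x^2 : ℝ):ℂ) := by push_cast; ring
  have h2 : Complex.exp ((b * Real.log x : ℝ) * Complex.I) / (1 + (x:ℂ)^2)
      = (((1+x^2)⁻¹ : ℝ) : ℂ) * Complex.exp ((b * Real.log x : ℝ) * Complex.I) := by
    rw [h1, div_eq_mul_inv, ← Complex.ofReal_inv]
    ring
  rw [h2, Complex.re_ofReal_mul, Complex.exp_ofReal_mul_I_re, div_eq_mul_inv]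
  ring

lemma rus_half (b : ℝ) :
    ∫ x in Ioo (0:ℝ) 1, Real.cos (b * Real.log x) / (1 + x^2)
      = (1/2) * ∫ x in Ioi (0:ℝ), Real.cos (b * Real.log x) / (1 + x^2) := by
  set g : ℝ → ℝ := fun x => Real.cos (b * Real.log x) / (1 + x^2) with hg
  have hmeas : Measurable g := by measurability
  have hbound : ∀ x : ℝ, ‖g x‖ ≤ (1+x^2)⁻¹ := by
    intro x
    rw [hg]
    simp only [Real.norm_eq_abs, abs_div, abs_of_pos (by positivity : (0:ℝ) < 1+x^2)]
    rw [div_le_iff₀ (by positivity : (0:ℝ) < 1+x^2), inv_mul_cancel₀ (by positivity : (1+x^2 : ℝ) ≠ 0)]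
    exact Real.abs_cos_le_one _
  have hint : Integrable g :=
    Integrable.mono' integrable_inv_one_add_sq hmeas.aestronglyMeasurable
      (Filter.Eventually.of_forall hbound)
  have himg : (fun x : ℝ => x⁻¹) '' (Ioo 0 1) = Ioi 1 := by
    ext y; constructor
    · rintro ⟨x, ⟨hx0, hx1⟩, rfl⟩
      exact (one_lt_inv_iff₀).mpr ⟨hx0, hx1⟩
    · intro hy
      have hy1 : (1:ℝ) < y := hy
      have hy0 : (0:ℝ) < y := by linarith
      exact ⟨y⁻¹, ⟨by positivity, by rw [inv_lt_one_iff₀]; exact Or.inr hy1⟩, by simp⟩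
  have hder : ∀ x ∈ Ioo (0:ℝ) 1, HasDerivWithinAt (fun x:ℝ => x⁻¹) (-(x^2)⁻¹) (Ioo 0 1) x :=
    fun x hx => (hasDerivAt_inv hx.1.ne').hasDerivWithinAt
  have hinj : InjOn (fun x:ℝ => x⁻¹) (Ioo 0 1) := fun a _ c _ h => inv_injective h
  have h2 : ∫ x in Ioi (1:ℝ), g x = ∫ x in Ioo (0:ℝ) 1, g x := by
    have h := integral_image_eq_integral_abs_deriv_smul measurableSet_Ioo hder hinj g
    rw [himg] at h
    rw [h]
    refine setIntegral_congr_fun measurableSet_Ioo (fun x hx => ?_)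
    obtain ⟨hx0, hx1⟩ := hx
    rw [hg]
    simp only [smul_eq_mul, abs_neg, abs_of_pos (by positivity : (0:ℝ) < (x^2)⁻¹)]
    rw [Real.log_inv, mul_neg, Real.cos_neg]
    rw [div_eq_mul_inv, div_eq_mul_inv]
    rw [show (1 + (x⁻¹)^2 : ℝ) = (1+x^2) * (x^2)⁻¹ by field_simp; ring]
    field_simp
  have hsplit : ∫ x in Ioi (0:ℝ), g x = (∫ x in Ioc (0:ℝ) 1, g x) + ∫ x in Ioi (1:ℝ), g x := by
    rw [← Set.Ioc_union_Ioi_eq_Ioi (zero_le_one (α := ℝ)),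
      MeasureTheory.setIntegral_union Set.Ioc_disjoint_Ioi_same measurableSet_Ioi
        hint.integrableOn hint.integrableOn]
  rw [hsplit, integral_Ioc_eq_integral_Ioo, h2]
  ring

theorem russell_integral_5 :
    ∫ x in Set.Ioo (0:ℝ) 1, Real.exp (-(Real.log x)^2) / (1 + x^2) =
    ∫ x in Set.Ioi (0:ℝ), Real.exp (-4 * x^2 / π) / Real.cosh (2 * Real.sqrt π * x) := by
  have hπ : (0:ℝ) < π := Real.pi_pos
  have hsπ : (0:ℝ) < Real.sqrt π := Real.sqrt_pos.mpr hπ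
  set f : ℝ → ℝ := fun s => Real.exp (-s^2) / Real.cosh (π*s) with hf
  -- RHS
  have hR : (∫ x in Set.Ioi (0:ℝ), Real.exp (-4 * x^2 / π) / Real.cosh (2 * Real.sqrt π * x))
      = (Real.sqrt π / 2) * ∫ s in Set.Ioi (0:ℝ), f s := by
    have h := integral_comp_mul_left_Ioi f 0 (show (0:ℝ) < 2/Real.sqrt π by positivity)
    rw [mul_zero] at h
    have heq : ∀ x : ℝ, f ((2/Real.sqrt π) * x)
        = Real.exp (-4 * x^2 / π) / Real.cosh (2 * Real.sqrt π * x) := by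
      intro x
      have hsq : ((2/Real.sqrt π) * x)^2 = 4 * x^2 / π := by
        rw [mul_pow, div_pow, Real.sq_sqrt hπ.le]; ring
      have harg : π * ((2/Real.sqrt π) * x) = 2 * Real.sqrt π * x := by
        field_simp
        linear_combination (-x) * Real.sq_sqrt hπ.le
      rw [hf]
      simp only
      rw [hsq, harg]
      ring_nf
    simp only [heq] at h
    rw [h, smul_eq_mul]
    congr 1
    rw [inv_div]
  -- LHS
  set G : ℝ → ℝ → ℝ := fun x s => Real.exp (-s^2) * Real.cos (2*s*Real.log x) / (1+x^2) with hG
  have hL1 : ∀ x : ℝ, Real.exp (-(Real.log x)^2) / (1+x^2)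
      = (Real.sqrt π)⁻¹ * ∫ s : ℝ, G x s := by
    intro x
    have : (∫ s : ℝ, G x s) = (∫ s : ℝ, Real.exp (-s^2) * Real.cos (2*s*Real.log x)) / (1+x^2) := by
      rw [hG]
      simp only
      rw [integral_div]
    rw [this, rus_gauss (Real.log x)]
    field_simp
  have hGint : Integrable (Function.uncurry G) ((volume.restrict (Ioo 0 1)).prod volume) := by
    have m1 : Measurable (fun p : ℝ×ℝ => Real.exp (-p.2^2)) :=
      Real.measurable_exp.comp ((measurable_snd.pow_const 2).neg)
    have m2 : Measurable (fun p : ℝ×ℝ => Real.cos (2*p.2*Real.log p.1)) :=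
      Real.measurable_cos.comp ((measurable_const.mul measurable_snd).mul
        (Real.measurable_log.comp measurable_fst))
    have m3 : Measurable (fun p : ℝ×ℝ => 1 + p.1^2) :=
      measurable_const.add (measurable_fst.pow_const 2)
    have h1 : Integrable (fun _ : ℝ => (1:ℝ)) (volume.restrict (Ioo 0 1)) :=
      integrableOn_const measure_Ioo_lt_top.ne
    have hexp : Integrable (fun s : ℝ => Real.exp (-s^2)) := by
      have := integrable_exp_neg_mul_sq (b := (1:ℝ)) one_pos
      simpa using this
    refine Integrable.mono' (Integrable.mul_prod h1 hexp) (((m1.mul m2).div m3).aestronglyMeasurable) ?_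
    filter_upwards with p
    have hd : (1:ℝ) ≤ |1 + p.1^2| := by
      rw [abs_of_pos (by positivity : (0:ℝ) < 1 + p.1^2)]
      nlinarith [sq_nonneg p.1]
    calc ‖Function.uncurry G p‖
        = |Real.exp (-p.2^2) * Real.cos (2*p.2*Real.log p.1)| / |1 + p.1^2| := by
          rw [Function.uncurry, hG]
          simp only [Real.norm_eq_abs, abs_div]
      _ ≤ |Real.exp (-p.2^2) * Real.cos (2*p.2*Real.log p.1)| :=
          div_le_self (abs_nonneg _) hd
      _ ≤ 1 * Real.exp (-p.2^2) := by
          rw [abs_mul, one_mul, abs_of_pos (Real.exp_pos _)]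
          nlinarith [Real.abs_cos_le_one (2*p.2*Real.log p.1), Real.exp_pos (-p.2^2),
            abs_nonneg (Real.cos (2*p.2*Real.log p.1))]
  have hswap : ∫ x in Ioo (0:ℝ) 1, ∫ s : ℝ, G x s = ∫ s : ℝ, ∫ x in Ioo (0:ℝ) 1, G x s :=
    integral_integral_swap hGint
  have hL4 : ∀ s : ℝ, (∫ x in Ioo (0:ℝ) 1, G x s) = (π/4) * f s := by
    intro s
    have : (∫ x in Ioo (0:ℝ) 1, G x s)
        = Real.exp (-s^2) * ∫ x in Ioo (0:ℝ) 1, Real.cos ((2*s) * Real.log x) / (1+x^2) := by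
      rw [← integral_const_mul]
      refine setIntegral_congr_fun measurableSet_Ioo (fun x _ => ?_)
      rw [hG]
      simp only
      ring
    rw [this, rus_half, rus_mellinR, hf]
    simp only
    rw [show π*(2*s)/2 = π*s by ring]
    ring
  have hL5 : ∫ s : ℝ, f s = 2 * ∫ s in Ioi (0:ℝ), f s := by
    have h := integral_comp_abs (f := f)
    rw [← h]
    congr 1
    funext s
    rw [hf]
    simp only
    rw [sq_abs, show π * |s| = |π * s| by rw [abs_mul, abs_of_pos hπ], Real.cosh_abs]
  calc ∫ x in Set.Ioo (0:ℝ) 1, Real.exp (-(Real.log x)^2) / (1 + x^2)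
      = ∫ x in Ioo (0:ℝ) 1, (Real.sqrt π)⁻¹ * ∫ s : ℝ, G x s := by
        refine setIntegral_congr_fun measurableSet_Ioo (fun x _ => hL1 x)
    _ = (Real.sqrt π)⁻¹ * ∫ x in Ioo (0:ℝ) 1, ∫ s : ℝ, G x s := integral_const_mul _ _
    _ = (Real.sqrt π)⁻¹ * ∫ s : ℝ, ∫ x in Ioo (0:ℝ) 1, G x s := by rw [hswap]
    _ = (Real.sqrt π)⁻¹ * ∫ s : ℝ, (π/4) * f s := by
        congr 1
        exact integral_congr_ae (Filter.Eventually.of_forall hL4)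
    _ = (Real.sqrt π)⁻¹ * ((π/4) * (2 * ∫ s in Ioi (0:ℝ), f s)) := by
        rw [integral_const_mul, hL5]
    _ = (Real.sqrt π / 2) * ∫ s in Set.Ioi (0:ℝ), f s := by
        field_simp
        linear_combination (-4 * ∫ s in Ioi (0:ℝ), f s) * Real.sq_sqrt hπ.le
    _ = ∫ x in Set.Ioi (0:ℝ), Real.exp (-4 * x^2 / π) / Real.cosh (2 * Real.sqrt π * x) := hR.symm
end
end

section
/- ∫₀^∞ ( e^{-x²/π²} + π^{5/2} e^{-x²} ) x²/cosh(x) dx = (π²/2) ∫₀^∞ e^{-x²/π²}/cosh(x) dx. -/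
open Real MeasureTheory
open Set Complex FourierTransform

noncomputable section

namespace Russell7

def phi (x : ℝ) : ℝ := (1 + Real.exp (-(2*π*x)))⁻¹

lemma phi_pos (x : ℝ) : 0 < phi x := by unfold phi; positivity

lemma phi_lt_one (x : ℝ) : phi x < 1 := by
  unfold phi
  rw [inv_lt_one_iff₀]
  right
  linarith [Real.exp_pos (-(2*π*x))]

lemma phi_hasDerivAt (x : ℝ) :
    HasDerivAt phi (2*π*Real.exp (-(2*π*x)) / (1 + Real.exp (-(2*π*x)))^2) x := by
  have h1 : HasDerivAt (fun x : ℝ => 1 + Real.exp (-(2*π*x)))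
      (-(2*π) * Real.exp (-(2*π*x))) x := by
    have := (Real.hasDerivAt_exp (-(2*π*x))).comp x
      ((hasDerivAt_id x).const_mul (2*π)).neg
    simpa [mul_comm] using this.const_add 1
  have h2 := h1.inv (by positivity)
  exact h2.congr_deriv (by ring)

lemma phi_injOn : Set.InjOn phi Set.univ := by
  intro a _ b _ h
  unfold phi at h
  have := inv_inj.mp h
  have h2 : Real.exp (-(2*π*a)) = Real.exp (-(2*π*b)) := by linarith
  have := Real.exp_injective h2
  have hπ := Real.pi_pos
  nlinarith

lemma phi_image : phi '' Set.univ = Set.Ioo 0 1 := by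
  apply Set.Subset.antisymm
  · rintro t ⟨x, -, rfl⟩
    exact ⟨phi_pos x, phi_lt_one x⟩
  · rintro t ⟨ht0, ht1⟩
    refine ⟨-(Real.log (t⁻¹ - 1))/(2*π), trivial, ?_⟩
    have h1 : (1:ℝ) < t⁻¹ := (one_lt_inv_iff₀).mpr ⟨ht0, ht1⟩
    have h2 : 0 < t⁻¹ - 1 := by linarith
    unfold phi
    rw [show -(2*π*(-(Real.log (t⁻¹ - 1))/(2*π))) = Real.log (t⁻¹ - 1) by
      field_simp]
    rw [Real.exp_log h2]
    field_simp
    ring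

/-- The key pointwise substitution identity. -/
lemma pointwise_subst (ξ x : ℝ) :
    |2*π*Real.exp (-(2*π*x)) / (1 + Real.exp (-(2*π*x)))^2| •
      ((π:ℂ)⁻¹ * (((phi x : ℝ):ℂ) ^ (((1:ℂ)/2 - Complex.I*ξ) - 1) *
        ((1:ℂ) - ((phi x : ℝ):ℂ)) ^ (((1:ℂ) - ((1:ℂ)/2 - Complex.I*ξ)) - 1)))
    = Complex.exp (↑(-2 * π * x * ξ) * Complex.I) * ((Real.cosh (π*x))⁻¹ : ℂ) := by
  set c : ℂ := (1:ℂ)/2 - Complex.I*ξ with hc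
  set E : ℝ := Real.exp (-(2*π*x)) with hE
  have hEpos : 0 < E := Real.exp_pos _
  have ht0 : 0 < phi x := phi_pos x
  have ht1 : phi x < 1 := phi_lt_one x
  have h1t : (0:ℝ) < 1 - phi x := by linarith
  -- logs
  have hlogt : Real.log (phi x) = -Real.log (1+E) := by
    rw [phi, Real.log_inv]
  have h1mt : (1:ℝ) - phi x = E * phi x := by
    rw [phi]; field_simp; rw [hE]; ring
  have hlog1mt : Real.log (1 - phi x) = -(2*π*x) - Real.log (1+E) := by
    rw [h1mt, Real.log_mul (ne_of_gt hEpos) (ne_of_gt ht0), hlogt, hE, Real.log_exp]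
    ring
  -- turn cpow into cexp
  have htne : ((phi x : ℝ):ℂ) ≠ 0 := by
    exact_mod_cast ne_of_gt ht0
  have h1tne : ((1:ℂ) - ((phi x : ℝ):ℂ)) ≠ 0 := by
    have h : ((1 - phi x : ℝ):ℂ) ≠ 0 := by exact_mod_cast ne_of_gt h1t
    simpa using h
  have e1 : ((phi x : ℝ):ℂ) ^ (c - 1) = Complex.exp (↑(Real.log (phi x)) * (c-1)) := by
    rw [Complex.cpow_def_of_ne_zero htne, Complex.ofReal_log ht0.le]
  have e2 : ((1:ℂ) - ((phi x : ℝ):ℂ)) ^ ((1 - c) - 1)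
      = Complex.exp (↑(Real.log (1 - phi x)) * (-c)) := by
    have : ((1:ℂ) - ((phi x : ℝ):ℂ)) = (((1 - phi x : ℝ)):ℂ) := by push_cast; ring
    rw [this, Complex.cpow_def_of_ne_zero (by rw [← this]; exact h1tne),
      Complex.ofReal_log h1t.le]
    ring_nf
  rw [e1, e2, ← Complex.exp_add]
  -- exponent simplification
  have hexp : (↑(Real.log (phi x)) * (c-1) + ↑(Real.log (1 - phi x)) * (-c))
      = (↑(Real.log (1+E)) : ℂ) + ↑(π*x) + ↑(-2*π*x*ξ) * Complex.I := by
    rw [hlogt, hlog1mt]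
    push_cast
    rw [hc]
    ring
  rw [hexp, Complex.exp_add, Complex.exp_add]
  -- now all real
  have habs : |2*π*E / (1+E)^2| = 2*π*E / (1+E)^2 := by
    rw [abs_of_pos]; positivity
  rw [habs]
  have hcosh : ((2*π*E / (1+E)^2) * (π⁻¹ * (Real.exp (Real.log (1+E)) * Real.exp (π*x))) : ℝ)
      = (Real.cosh (π*x))⁻¹ := by
    rw [Real.exp_log (by positivity), Real.cosh_eq]
    rw [hE]
    have h1 : Real.exp (-(2*π*x)) * Real.exp (π*x) = Real.exp (-(π*x)) := by
      rw [← Real.exp_add]; ring_nf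
    have h2 : Real.exp (π*x) * Real.exp (-(π*x)) = 1 := by
      rw [← Real.exp_add]; simp
    have h3 : Real.exp (-(π*x)) * Real.exp (-(π*x)) = Real.exp (-(2*π*x)) := by
      rw [← Real.exp_add]; congr 1; ring
    have hπ : (π:ℝ) ≠ 0 := Real.pi_ne_zero
    field_simp
    linear_combination (rexp (π*x)+rexp (-(π*x)))*h1 + h2 + h3
  calc (2*π*E / (1+E)^2) • ((π:ℂ)⁻¹ * (Complex.exp ↑(Real.log (1+E)) *
        Complex.exp ↑(π*x) * Complex.exp (↑(-2*π*x*ξ) * Complex.I)))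
      = (((2*π*E / (1+E)^2) * (π⁻¹ * (Real.exp (Real.log (1+E)) * Real.exp (π*x))) : ℝ) : ℂ)
          * Complex.exp (↑(-2*π*x*ξ) * Complex.I) := by
        push_cast [← Complex.ofReal_exp]
        rw [real_smul]
        push_cast
        ring
    _ = Complex.exp (↑(-2 * π * x * ξ) * Complex.I) * ((Real.cosh (π*x))⁻¹ : ℂ) := by
        rw [hcosh]; push_cast; ring



lemma ft_sech (ξ : ℝ) :
    𝓕 (fun x : ℝ => ((Real.cosh (π*x))⁻¹ : ℂ)) ξ = ((Real.cosh (π*ξ))⁻¹ : ℂ) := by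
  set c : ℂ := (1:ℂ)/2 - Complex.I*ξ with hc
  set g : ℝ → ℂ := fun t =>
    (π:ℂ)⁻¹ * (((t : ℝ):ℂ) ^ (c - 1) * ((1:ℂ) - ((t : ℝ):ℂ)) ^ ((1 - c) - 1)) with hg
  have step1 : 𝓕 (fun x : ℝ => ((Real.cosh (π*x))⁻¹ : ℂ)) ξ
      = ∫ x : ℝ, Complex.exp (↑(-2 * π * x * ξ) * Complex.I) * ((Real.cosh (π*x))⁻¹ : ℂ) := by
    rw [Real.fourier_real_eq_integral_exp_smul]
    simp_rw [smul_eq_mul]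
  have step2 : ∫ x : ℝ, Complex.exp (↑(-2 * π * x * ξ) * Complex.I) * ((Real.cosh (π*x))⁻¹ : ℂ)
      = ∫ t in Set.Ioo (0:ℝ) 1, g t := by
    rw [← phi_image, integral_image_eq_integral_abs_deriv_smul MeasurableSet.univ
      (fun x _ => (phi_hasDerivAt x).hasDerivWithinAt) phi_injOn g]
    rw [MeasureTheory.setIntegral_univ]
    congr 1
    funext x
    exact (pointwise_subst ξ x).symm
  have step3 : ∫ t in Set.Ioo (0:ℝ) 1, g t = (π:ℂ)⁻¹ * Complex.betaIntegral c (1-c) := by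
    rw [hg, MeasureTheory.integral_const_mul, Complex.betaIntegral,
      intervalIntegral.integral_of_le zero_le_one, MeasureTheory.integral_Ioc_eq_integral_Ioo]
  have hs : 0 < c.re := by
    rw [hc]; simp
  have ht : 0 < (1-c).re := by
    rw [hc]; simp; norm_num
  have hbeta := Complex.Gamma_mul_Gamma_eq_betaIntegral hs ht
  rw [show c + (1-c) = 1 by ring, Complex.Gamma_one, one_mul] at hbeta
  have step4 : Complex.betaIntegral c (1-c) = ↑π / Complex.sin (↑π * c) := by
    rw [← hbeta, Complex.Gamma_mul_Gamma_one_sub]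
  have step5 : Complex.sin (↑π * c) = ↑(Real.cosh (π*ξ)) := by
    rw [show (↑π * c : ℂ) = ↑π/2 - (↑(π*ξ))*Complex.I by rw [hc]; push_cast; ring]
    rw [Complex.sin_pi_div_two_sub, Complex.cos_mul_I, ← Complex.ofReal_cosh]
  rw [step1, step2, step3, step4, step5]
  have hcne : ((Real.cosh (π*ξ) : ℝ):ℂ) ≠ 0 :=
    Complex.ofReal_ne_zero.mpr (ne_of_gt (Real.cosh_pos _))
  have hπne : ((π:ℝ):ℂ) ≠ 0 := Complex.ofReal_ne_zero.mpr Real.pi_ne_zero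
  field_simp

end Russell7

namespace Russell7
open Complex

noncomputable def aC : ℂ := 1 / (π:ℂ) ^ (1/2 : ℂ)

noncomputable def gaussC (x : ℝ) : ℂ := Complex.exp (-↑π * ↑π * (x:ℂ)^2)

lemma gaussC_ofReal (x : ℝ) : gaussC x = ((Real.exp (-(π*π)*x^2) : ℝ) : ℂ) := by
  rw [gaussC, Complex.ofReal_exp]; congr 1; push_cast; ring

lemma integrable_pow2_gauss {b : ℝ} (hb : 0 < b) :
    Integrable fun x : ℝ => x^2 * Real.exp (-b*x^2) := by
  have h := integrable_rpow_mul_exp_neg_mul_sq hb (s := 2) (by norm_num)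
  have h2 : ∀ x:ℝ, x ^ (2:ℝ) = x^2 := fun x => by
    rw [show (2:ℝ) = ((2:ℕ):ℝ) by norm_num, Real.rpow_natCast]
  simpa only [h2] using h

lemma ig0 : Integrable gaussC := by
  have : Integrable fun x : ℝ => Real.exp (-(π*π)*x^2) :=
    integrable_exp_neg_mul_sq (by positivity)
  exact this.ofReal.congr (Filter.Eventually.of_forall fun x => (gaussC_ofReal x).symm)

lemma ig1 : Integrable (fun x : ℝ => (x:ℂ) * gaussC x) := by
  have : Integrable fun x : ℝ => x * Real.exp (-(π*π)*x^2) :=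
    integrable_mul_exp_neg_mul_sq (by positivity)
  refine (this.ofReal (𝕜 := ℂ)).congr (Filter.Eventually.of_forall fun x => ?_)
  show ((x * rexp (-(π*π)*x^2) : ℝ) : ℂ) = (x:ℂ) * gaussC x
  rw [gaussC, show -↑π * ↑π * ((x:ℝ):ℂ)^2 = ((-(π*π)*x^2 : ℝ) : ℂ) by push_cast; ring,
    ← Complex.ofReal_exp, ← Complex.ofReal_mul]

lemma ig2 : Integrable (fun x : ℝ => (x:ℂ)^2 * gaussC x) := by
  have : Integrable fun x : ℝ => x^2 * Real.exp (-(π*π)*x^2) :=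
    integrable_pow2_gauss (by positivity)
  refine (this.ofReal (𝕜 := ℂ)).congr (Filter.Eventually.of_forall fun x => ?_)
  show ((x^2 * rexp (-(π*π)*x^2) : ℝ) : ℂ) = (x:ℂ)^2 * gaussC x
  rw [gaussC, show -↑π * ↑π * ((x:ℝ):ℂ)^2 = ((-(π*π)*x^2 : ℝ) : ℂ) by push_cast; ring,
    ← Complex.ofReal_exp, ← Complex.ofReal_pow, ← Complex.ofReal_mul]

lemma ft_const_mul (r : ℂ) (f : ℝ → ℂ) (w : ℝ) :
    𝓕 (fun x => r * f x) w = r * 𝓕 f w := by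
  simp_rw [Real.fourier_real_eq_integral_exp_smul, smul_eq_mul,
    mul_left_comm _ r, MeasureTheory.integral_const_mul]

lemma ft_gaussC : 𝓕 gaussC = fun t : ℝ => aC * Complex.exp (-(t:ℂ)^2) := by
  have h := fourier_gaussian_pi (b := (π:ℂ)) (by simp [Real.pi_pos])
  rw [show (fun x : ℝ => cexp (-↑π * ↑π * (x:ℂ)^2)) = gaussC from rfl] at h
  rw [h]
  funext t
  rw [aC]
  congr 1
  rw [show (-↑π/↑π : ℂ) = -1 by
    rw [neg_div, div_self (Complex.ofReal_ne_zero.mpr Real.pi_ne_zero)]]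
  ring_nf

lemma hD1 (t : ℝ) : HasDerivAt (fun t : ℝ => aC * Complex.exp (-(t:ℂ)^2))
    (aC * Complex.exp (-(t:ℂ)^2) * (-2*t)) t := by
  have h : HasDerivAt (fun z : ℂ => aC * Complex.exp (-z^2))
      (aC * Complex.exp (-(t:ℂ)^2) * (-2*t)) (t:ℂ) := by
    have := (((hasDerivAt_pow 2 (t:ℂ)).neg).cexp).const_mul aC
    exact this.congr_deriv (by simp only [Pi.neg_apply]; norm_num; ring)
  exact h.comp_ofReal

lemma hD2 (t : ℝ) : HasDerivAt (fun t : ℝ => aC * Complex.exp (-(t:ℂ)^2) * (-2*t))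
    (aC * Complex.exp (-(t:ℂ)^2) * (4*t^2 - 2)) t := by
  have h2 : HasDerivAt (fun t : ℝ => (-2*t : ℂ)) (-2) t := by
    have : HasDerivAt (fun z : ℂ => -2*z) (-2) (t:ℂ) := by
      simpa using (hasDerivAt_id (t:ℂ)).const_mul (-2:ℂ)
    exact this.comp_ofReal
  have := (hD1 t).mul h2
  exact this.congr_deriv (by ring)

lemma ft_x2gauss (w : ℝ) :
    𝓕 (fun x : ℝ => (x:ℂ)^2 * gaussC x) w
      = aC * (1 - 2*(w:ℂ)^2) / (2*(π:ℂ)^2) * Complex.exp (-(w:ℂ)^2) := by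
  have hπ : ((π:ℝ):ℂ) ≠ 0 := Complex.ofReal_ne_zero.mpr Real.pi_ne_zero
  have hig1 : Integrable (fun x : ℝ => x • gaussC x) := by
    simpa only [real_smul] using ig1
  have E1 : 𝓕 (fun x : ℝ => (-2 * ↑π * Complex.I * ↑x) • gaussC x)
      = fun t : ℝ => aC * Complex.exp (-(t:ℂ)^2) * (-2*t) := by
    rw [← Real.deriv_fourier ig0 hig1, ft_gaussC]
    funext t
    exact (hD1 t).deriv
  set f1 : ℝ → ℂ := fun x => (-2 * ↑π * Complex.I * ↑x) • gaussC x with hf1def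
  have hf1 : Integrable f1 := by
    have : Integrable fun x : ℝ => (-2 * ↑π * Complex.I) * ((x:ℂ) * gaussC x) :=
      ig1.const_mul _
    refine this.congr (Filter.Eventually.of_forall fun x => ?_)
    rw [hf1def]; simp only [smul_eq_mul]; ring
  have hxf1 : Integrable (fun x : ℝ => x • f1 x) := by
    have : Integrable fun x : ℝ => (-2 * ↑π * Complex.I) * ((x:ℂ)^2 * gaussC x) :=
      ig2.const_mul _
    refine this.congr (Filter.Eventually.of_forall fun x => ?_)
    rw [hf1def]; simp only [smul_eq_mul, real_smul]; ring
  have E2 : 𝓕 (fun x : ℝ => (-2 * ↑π * Complex.I * ↑x) • f1 x)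
      = fun t : ℝ => aC * Complex.exp (-(t:ℂ)^2) * (4*t^2-2) := by
    rw [← Real.deriv_fourier hf1 hxf1, E1]
    funext t
    exact (hD2 t).deriv
  have key : (fun x : ℝ => (-2 * ↑π * Complex.I * ↑x) • f1 x)
      = fun x : ℝ => (-4*(π:ℂ)^2) * ((x:ℂ)^2 * gaussC x) := by
    funext x
    rw [hf1def]
    simp only [smul_eq_mul]
    rw [show ((-2 * ↑π * Complex.I * ↑x) * (-2 * ↑π * Complex.I * ↑x * gaussC x))
      = (Complex.I^2) * (4*(π:ℂ)^2) * ((x:ℂ)^2 * gaussC x) by ring, Complex.I_sq]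
    ring
  rw [key] at E2
  have := congrFun E2 w
  rw [ft_const_mul] at this
  have h4 : (-4*(π:ℂ)^2) ≠ 0 := by
    intro h
    apply hπ
    have : ((π:ℝ):ℂ)^2 = 0 := by linear_combination (-1/4 : ℂ) * h
    exact pow_eq_zero_iff (by norm_num) |>.mp this
  field_simp at this ⊢
  linear_combination (-1/2 : ℂ) * this

end Russell7

namespace Russell7

lemma sech_le_exp_left {x : ℝ} (hx : x ≤ 0) : (Real.cosh (π * x))⁻¹ ≤ 2 * Real.exp x := by
  have h1 : Real.exp (-(π*x)) / 2 ≤ Real.cosh (π*x) := by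
    rw [Real.cosh_eq]
    have := Real.exp_pos (π*x); linarith
  have h2 : (0:ℝ) < Real.exp (-(π*x)) / 2 := by positivity
  have h3 := inv_anti₀ h2 h1
  have h4 : (Real.exp (-(π*x)) / 2)⁻¹ = 2 * Real.exp (π*x) := by
    rw [Real.exp_neg]; field_simp
  rw [h4] at h3
  have h5 : Real.exp (π*x) ≤ Real.exp x := by
    apply Real.exp_le_exp.mpr
    nlinarith [Real.pi_gt_three]
  linarith
lemma sech_le_exp_right {x : ℝ} (hx : 0 ≤ x) : (Real.cosh (π * x))⁻¹ ≤ 2 * Real.exp (-x) := by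
  have h1 : Real.exp (π*x) / 2 ≤ Real.cosh (π*x) := by
    rw [Real.cosh_eq]
    have := Real.exp_pos (-(π*x)); linarith
  have h2 : (0:ℝ) < Real.exp (π*x) / 2 := by positivity
  have h3 := inv_anti₀ h2 h1
  have h4 : (Real.exp (π*x) / 2)⁻¹ = 2 * Real.exp (-(π*x)) := by
    rw [Real.exp_neg]; field_simp
  rw [h4] at h3
  have h5 : Real.exp (-(π*x)) ≤ Real.exp (-x) := by
    apply Real.exp_le_exp.mpr
    nlinarith [Real.pi_gt_three]
  linarith

lemma cont_sech : Continuous fun x : ℝ => (Real.cosh (π * x))⁻¹ :=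
  (Real.continuous_cosh.comp (continuous_const.mul continuous_id)).inv₀
    fun x => ne_of_gt (Real.cosh_pos _)

lemma integrable_sech : Integrable fun x : ℝ => (Real.cosh (π * x))⁻¹ := by
  rw [← MeasureTheory.integrableOn_univ, ← Set.Iic_union_Ioi (a := (0:ℝ))]
  apply MeasureTheory.IntegrableOn.union
  · apply (((integrableOn_exp_Iic 0).const_mul 2)).mono'
      (cont_sech.aestronglyMeasurable.restrict)
    refine (ae_restrict_iff' measurableSet_Iic).mpr (Filter.Eventually.of_forall fun x hx => ?_)
    rw [Real.norm_eq_abs, abs_of_pos (by positivity)]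
    exact sech_le_exp_left hx
  · apply (((exp_neg_integrableOn_Ioi 0 one_pos)).const_mul 2).mono'
      (cont_sech.aestronglyMeasurable.restrict)
    refine (ae_restrict_iff' measurableSet_Ioi).mpr (Filter.Eventually.of_forall fun x hx => ?_)
    rw [Real.norm_eq_abs, abs_of_pos (by positivity)]
    simpa using sech_le_exp_right (le_of_lt hx)

lemma integrable_sechC : Integrable fun x : ℝ => ((Real.cosh (π * x))⁻¹ : ℂ) := by
  refine (integrable_sech.ofReal (𝕜 := ℂ)).congr (Filter.Eventually.of_forall fun x => ?_)
  show (((Real.cosh (π * x))⁻¹ : ℝ) : ℂ) = _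
  norm_cast

lemma sech_le_one (c x : ℝ) : (Real.cosh (c * x))⁻¹ ≤ 1 := by
  rw [inv_le_one_iff₀]
  right
  exact Real.one_le_cosh _

lemma integrable_gauss_sech {b : ℝ} (hb : 0 < b) (c : ℝ) :
    Integrable fun x : ℝ => Real.exp (-b*x^2) * (Real.cosh (c*x))⁻¹ := by
  apply (integrable_exp_neg_mul_sq hb).mono'
    ((Real.continuous_exp.comp (by continuity)).mul
      ((Real.continuous_cosh.comp (continuous_const.mul continuous_id)).inv₀
        fun x => ne_of_gt (Real.cosh_pos _))).aestronglyMeasurable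
  refine Filter.Eventually.of_forall fun x => ?_
  show ‖Real.exp (-b*x^2) * (Real.cosh (c*x))⁻¹‖ ≤ _
  rw [show ‖Real.exp (-b*x^2) * (Real.cosh (c*x))⁻¹‖
      = Real.exp (-b*x^2) * (Real.cosh (c*x))⁻¹ from abs_of_pos (by positivity)]
  exact mul_le_of_le_one_right (by positivity) (sech_le_one c x)

lemma integrable_x2_gauss_sech {b : ℝ} (hb : 0 < b) (c : ℝ) :
    Integrable fun x : ℝ => x^2 * Real.exp (-b*x^2) * (Real.cosh (c*x))⁻¹ := by
  have hmaj : Integrable fun x : ℝ => x^2 * Real.exp (-b*x^2) := by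
    have h := integrable_rpow_mul_exp_neg_mul_sq hb (s := 2) (by norm_num)
    have h2 : ∀ x:ℝ, x ^ (2:ℝ) = x^2 := fun x => by
      rw [show (2:ℝ) = ((2:ℕ):ℝ) by norm_num, Real.rpow_natCast]
    simpa only [h2] using h
  apply hmaj.mono'
    (((continuous_pow 2).mul (Real.continuous_exp.comp (by continuity))).mul
      ((Real.continuous_cosh.comp (continuous_const.mul continuous_id)).inv₀
        fun x => ne_of_gt (Real.cosh_pos _))).aestronglyMeasurable
  refine Filter.Eventually.of_forall fun x => ?_
  show ‖x^2 * Real.exp (-b*x^2) * (Real.cosh (c*x))⁻¹‖ ≤ _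
  rw [show ‖x^2 * Real.exp (-b*x^2) * (Real.cosh (c*x))⁻¹‖
      = x^2 * Real.exp (-b*x^2) * (Real.cosh (c*x))⁻¹ from abs_of_nonneg (by positivity)]
  exact mul_le_of_le_one_right (by positivity) (sech_le_one c x)



end Russell7

namespace Russell7

lemma integral_coe (f : ℝ → ℝ) : ∫ x : ℝ, ((f x : ℝ) : ℂ) = ((∫ x : ℝ, f x : ℝ) : ℂ) :=
  integral_ofReal

lemma haC : aC = (((Real.sqrt π)⁻¹ : ℝ) : ℂ) := by
  rw [aC]
  have h1 : ((π:ℝ):ℂ)^(1/2:ℂ) = ((π ^ (1/2:ℝ) : ℝ) : ℂ) := by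
    rw [Complex.ofReal_cpow Real.pi_pos.le]
    norm_num
  rw [h1, ← Real.sqrt_eq_rpow]
  push_cast
  rw [one_div]

lemma mult_formula :
    ∫ ξ : ℝ, (𝓕 (fun x : ℝ => (x:ℂ)^2 * gaussC x)) ξ * ((Real.cosh (π*ξ))⁻¹ : ℂ)
      = ∫ x : ℝ, ((x:ℂ)^2 * gaussC x) * 𝓕 (fun ξ : ℝ => ((Real.cosh (π*ξ))⁻¹ : ℂ)) x := by
  have hLflip : (innerₗ ℝ).flip = innerₗ ℝ := by
    refine LinearMap.ext fun x => LinearMap.ext fun y => ?_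
    simpa using mul_comm x y
  have h := VectorFourier.integral_fourierIntegral_smul_eq_flip
    (F := ℂ) (e := Real.fourierChar) (L := innerₗ ℝ) (μ := volume) (ν := volume)
    Real.continuous_fourierChar continuous_inner ig2 integrable_sechC
  rw [hLflip] at h
  simp only [smul_eq_mul] at h
  exact h

lemma key_real :
    (∫ x : ℝ, Real.exp (-x^2) * (Real.cosh (π*x))⁻¹)
      - 2 * ∫ x : ℝ, x^2 * Real.exp (-x^2) * (Real.cosh (π*x))⁻¹
    = 2*π^2*Real.sqrt π * ∫ x : ℝ, x^2 * Real.exp (-(π*π)*x^2) * (Real.cosh (π*x))⁻¹ := by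
  have hsqrtπ : 0 < Real.sqrt π := Real.sqrt_pos.mpr Real.pi_pos
  have h := mult_formula
  -- rewrite RHS using ft_sech
  have hR : ∫ x : ℝ, ((x:ℂ)^2 * gaussC x) * 𝓕 (fun ξ : ℝ => ((Real.cosh (π*ξ))⁻¹ : ℂ)) x
      = ((∫ x : ℝ, x^2 * Real.exp (-(π*π)*x^2) * (Real.cosh (π*x))⁻¹ : ℝ) : ℂ) := by
    rw [← integral_coe]
    congr 1
    funext x
    rw [ft_sech x, gaussC_ofReal]
    push_cast
    ring
  -- rewrite LHS using ft_x2gauss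
  have hL : ∫ ξ : ℝ, (𝓕 (fun x : ℝ => (x:ℂ)^2 * gaussC x)) ξ * ((Real.cosh (π*ξ))⁻¹ : ℂ)
      = (aC/(2*(π:ℂ)^2)) *
        ((∫ ξ : ℝ, (1-2*ξ^2) * Real.exp (-ξ^2) * (Real.cosh (π*ξ))⁻¹ : ℝ) : ℂ) := by
    rw [← integral_coe, ← MeasureTheory.integral_const_mul]
    congr 1
    funext ξ
    rw [ft_x2gauss ξ]
    have he : Complex.exp (-(ξ:ℂ)^2) = ((Real.exp (-ξ^2) : ℝ) : ℂ) := by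
      rw [Complex.ofReal_exp]
      congr 1
      push_cast
      ring
    rw [he]
    push_cast
    ring
  rw [hL, hR, haC] at h
  -- split the integral on LHS
  have hsplit : ∫ ξ : ℝ, (1-2*ξ^2) * Real.exp (-ξ^2) * (Real.cosh (π*ξ))⁻¹
      = (∫ x : ℝ, Real.exp (-x^2) * (Real.cosh (π*x))⁻¹)
        - 2 * ∫ x : ℝ, x^2 * Real.exp (-x^2) * (Real.cosh (π*x))⁻¹ := by
    have h1 : Integrable fun x : ℝ => Real.exp (-x^2) * (Real.cosh (π*x))⁻¹ := by
      have := integrable_gauss_sech one_pos π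
      simpa only [neg_mul, one_mul] using this
    have h2 : Integrable fun x : ℝ => 2 * (x^2 * Real.exp (-x^2) * (Real.cosh (π*x))⁻¹) := by
      have := (integrable_x2_gauss_sech one_pos π).const_mul 2
      simpa only [neg_mul, one_mul] using this
    have heq : (fun ξ : ℝ => (1-2*ξ^2) * Real.exp (-ξ^2) * (Real.cosh (π*ξ))⁻¹)
        = fun ξ : ℝ => (Real.exp (-ξ^2) * (Real.cosh (π*ξ))⁻¹)
          - 2 * (ξ^2 * Real.exp (-ξ^2) * (Real.cosh (π*ξ))⁻¹) := by
      funext ξ; ring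
    rw [heq, MeasureTheory.integral_sub h1 h2, MeasureTheory.integral_const_mul]
  rw [hsplit] at h
  -- now deduce the real identity
  set A : ℝ := (∫ x : ℝ, Real.exp (-x^2) * (Real.cosh (π*x))⁻¹)
      - 2 * ∫ x : ℝ, x^2 * Real.exp (-x^2) * (Real.cosh (π*x))⁻¹ with hA
  set B : ℝ := ∫ x : ℝ, x^2 * Real.exp (-(π*π)*x^2) * (Real.cosh (π*x))⁻¹ with hB
  have h' : (((Real.sqrt π)⁻¹ / (2*π^2) * A : ℝ) : ℂ) = ((B : ℝ) : ℂ) := by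
    rw [← h]
    push_cast
    ring
  have h'' : (Real.sqrt π)⁻¹ / (2*π^2) * A = B := Complex.ofReal_inj.mp h'
  have hπ : (0:ℝ) < π := Real.pi_pos
  field_simp at h''
  linarith [h'']

end Russell7

namespace Russell7

lemma integral_Ioi_even {f : ℝ → ℝ} (hf : Integrable f) (he : ∀ x, f (-x) = f x) :
    ∫ x in Set.Ioi (0:ℝ), f x = (∫ x : ℝ, f x) / 2 := by
  have h1 : ∫ x in Set.Iic (0:ℝ), f x = ∫ x in Set.Ioi (0:ℝ), f x := by
    have h := integral_comp_neg_Iic (0:ℝ) f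
    simp_rw [he] at h
    rw [neg_zero] at h
    exact h
  have h2 : ∫ x : ℝ, f x = (∫ x in Set.Iic (0:ℝ), f x) + ∫ x in Set.Ioi (0:ℝ), f x := by
    rw [← MeasureTheory.setIntegral_univ, ← Set.Iic_union_Ioi (a := (0:ℝ)),
      MeasureTheory.setIntegral_union (Set.Iic_disjoint_Ioi le_rfl) measurableSet_Ioi
        hf.integrableOn hf.integrableOn]
  rw [h2, h1]
  ring

lemma scale_pi (f : ℝ → ℝ) : ∫ x : ℝ, f x = π * ∫ x : ℝ, f (π * x) := by
  rw [MeasureTheory.Measure.integral_comp_mul_left f π, abs_of_pos (inv_pos.mpr Real.pi_pos),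
    smul_eq_mul]
  field_simp

end Russell7

end

theorem russell_integral_7 :
    ∫ x in Set.Ioi (0:ℝ),
      (Real.exp (-x^2 / π^2) + π ^ ((5:ℝ)/2) * Real.exp (-x^2)) * (x^2 / Real.cosh x) =
    (π^2 / 2) * ∫ x in Set.Ioi (0:ℝ), Real.exp (-x^2 / π^2) / Real.cosh x := by
  have hπ : (0:ℝ) < π := Real.pi_pos
  have hπ' : (π:ℝ) ≠ 0 := ne_of_gt hπ
  have hkey := Russell7.key_real
  set f1 : ℝ → ℝ := fun x => Real.exp (-x^2/π^2) * (x^2 / Real.cosh x) with hf1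
  set f2 : ℝ → ℝ := fun x => Real.exp (-x^2) * (x^2 / Real.cosh x) with hf2
  set f3 : ℝ → ℝ := fun x => Real.exp (-x^2/π^2) / Real.cosh x with hf3
  have i1 : Integrable f1 := by
    refine (Russell7.integrable_x2_gauss_sech (b := (π^2)⁻¹) (by positivity) 1).congr
      (Filter.Eventually.of_forall fun x => ?_)
    rw [hf1]
    simp only [one_mul]
    rw [show -x^2/π^2 = -(π^2)⁻¹*x^2 by ring]
    ring
  have i2 : Integrable f2 := by
    refine (Russell7.integrable_x2_gauss_sech (b := 1) one_pos 1).congr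
      (Filter.Eventually.of_forall fun x => ?_)
    rw [hf2]
    simp only [one_mul, neg_mul]
    ring
  have i3 : Integrable f3 := by
    refine (Russell7.integrable_gauss_sech (b := (π^2)⁻¹) (by positivity) 1).congr
      (Filter.Eventually.of_forall fun x => ?_)
    rw [hf3]
    simp only [one_mul]
    rw [show -x^2/π^2 = -(π^2)⁻¹*x^2 by ring]
    ring
  -- even
  have e1 : ∫ x in Set.Ioi (0:ℝ), f1 x = (∫ x : ℝ, f1 x)/2 :=
    Russell7.integral_Ioi_even i1 (fun x => by rw [hf1]; simp [neg_sq, Real.cosh_neg])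
  have e2 : ∫ x in Set.Ioi (0:ℝ), f2 x = (∫ x : ℝ, f2 x)/2 :=
    Russell7.integral_Ioi_even i2 (fun x => by rw [hf2]; simp [neg_sq, Real.cosh_neg])
  have e3 : ∫ x in Set.Ioi (0:ℝ), f3 x = (∫ x : ℝ, f3 x)/2 :=
    Russell7.integral_Ioi_even i3 (fun x => by rw [hf3]; simp [neg_sq, Real.cosh_neg])
  -- scaling
  set Jr : ℝ := ∫ x : ℝ, Real.exp (-x^2) * (Real.cosh (π*x))⁻¹ with hJr
  set Kr : ℝ := ∫ x : ℝ, x^2 * Real.exp (-x^2) * (Real.cosh (π*x))⁻¹ with hKr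
  set Kp : ℝ := ∫ x : ℝ, x^2 * Real.exp (-(π*π)*x^2) * (Real.cosh (π*x))⁻¹ with hKp
  have s1 : ∫ x : ℝ, f1 x = π^3 * Kr := by
    rw [Russell7.scale_pi f1]
    have hpt : (fun x : ℝ => f1 (π * x))
        = fun x : ℝ => π^2 * (x^2 * Real.exp (-x^2) * (Real.cosh (π*x))⁻¹) := by
      funext x
      rw [hf1]
      simp only
      rw [show -(π*x)^2/π^2 = -x^2 by field_simp]
      field_simp
    rw [hpt, MeasureTheory.integral_const_mul, hKr]
    ring
  have s2 : ∫ x : ℝ, f2 x = π^3 * Kp := by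
    rw [Russell7.scale_pi f2]
    have hpt : (fun x : ℝ => f2 (π * x))
        = fun x : ℝ => π^2 * (x^2 * Real.exp (-(π*π)*x^2) * (Real.cosh (π*x))⁻¹) := by
      funext x
      rw [hf2]
      simp only
      rw [show -(π*x)^2 = -(π*π)*x^2 by ring]
      field_simp
    rw [hpt, MeasureTheory.integral_const_mul, hKp]
    ring
  have s3 : ∫ x : ℝ, f3 x = π * Jr := by
    rw [Russell7.scale_pi f3]
    have hpt : (fun x : ℝ => f3 (π * x))
        = fun x : ℝ => Real.exp (-x^2) * (Real.cosh (π*x))⁻¹ := by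
      funext x
      rw [hf3]
      simp only
      rw [show -(π*x)^2/π^2 = -x^2 by field_simp]
      rw [div_eq_mul_inv]
    rw [hpt, hJr]
  -- split LHS
  have hsplit : ∫ x in Set.Ioi (0:ℝ),
      (Real.exp (-x^2 / π^2) + π ^ ((5:ℝ)/2) * Real.exp (-x^2)) * (x^2 / Real.cosh x)
      = (∫ x in Set.Ioi (0:ℝ), f1 x) + π ^ ((5:ℝ)/2) * ∫ x in Set.Ioi (0:ℝ), f2 x := by
    rw [← MeasureTheory.integral_const_mul, ← MeasureTheory.integral_add i1.integrableOn
      ((i2.const_mul _).integrableOn)]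
    congr 1
    funext x
    rw [hf1, hf2]
    simp only
    ring
  have hp52 : π ^ ((5:ℝ)/2) = π^2 * Real.sqrt π := by
    rw [show ((5:ℝ)/2) = (2:ℝ) + 1/2 by norm_num, Real.rpow_add hπ, Real.sqrt_eq_rpow,
      show (2:ℝ) = ((2:ℕ):ℝ) by norm_num, Real.rpow_natCast]
  rw [hsplit, e1, e2, e3, s1, s2, s3, hp52]
  linear_combination (-(π^3)/4) * hkey
end
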